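/- Suppose P₁, P₂ are idempotents on an n-dimensional inner product space with P₁*P₁ + P₂*P₂ = λI and rank P₁ + rank P₂ = n. If rank P₁ ≠ rank P₂ then λ = 1 and both P₁ and P₂ are orthogonal projections. -/

import Mathlib

theorem stmt_15 {𝕜 E : Type*} [RCLike 𝕜] [NormedAddCommGroup E]
    [InnerProductSpace 𝕜 E] [FiniteDimensional 𝕜 E]
    (P₁ P₂ : E →ₗ[𝕜] E) (h₁ : P₁ ∘ₗ P₁ = P₁) (h₂ : P₂ ∘ₗ P₂ = P₂)
    (c : ℝ) (hc : 0 < c)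
    (htight : (LinearMap.adjoint P₁) ∘ₗ P₁ + (LinearMap.adjoint P₂) ∘ₗ P₂ =
      ((c : ℝ) : 𝕜) • LinearMap.id)
    (hrank : Module.finrank 𝕜 (LinearMap.range P₁) +
        Module.finrank 𝕜 (LinearMap.range P₂) = Module.finrank 𝕜 E)
    (hne : Module.finrank 𝕜 (LinearMap.range P₁) ≠
        Module.finrank 𝕜 (LinearMap.range P₂)) :
    c = 1 ∧ LinearMap.adjoint P₁ = P₁ ∧ LinearMap.adjoint P₂ = P₂ := by
  classical
  -- the key pointwise norm identity
  have key : ∀ x : E, ‖P₁ x‖ ^ 2 + ‖P₂ x‖ ^ 2 = c * ‖x‖ ^ 2 := by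
    intro x
    have h := LinearMap.congr_fun htight x
    simp only [LinearMap.add_apply, LinearMap.comp_apply, LinearMap.smul_apply,
      LinearMap.id_apply] at h
    have h' : (inner 𝕜 x (LinearMap.adjoint P₁ (P₁ x)) : 𝕜)
        + inner 𝕜 x (LinearMap.adjoint P₂ (P₂ x)) = inner 𝕜 x (((c : ℝ) : 𝕜) • x) := by
      rw [← inner_add_right, h]
    rw [LinearMap.adjoint_inner_right, LinearMap.adjoint_inner_right, inner_smul_right,
      inner_self_eq_norm_sq_to_K, inner_self_eq_norm_sq_to_K, inner_self_eq_norm_sq_to_K] at h'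
    exact_mod_cast h'
  have fix₁ : ∀ y : E, P₁ y = y → ‖P₂ y‖ ^ 2 = (c - 1) * ‖y‖ ^ 2 := by
    intro y hy
    have h := key y
    rw [hy] at h
    linear_combination h
  have fix₂ : ∀ y : E, P₂ y = y → ‖P₁ y‖ ^ 2 = (c - 1) * ‖y‖ ^ 2 := by
    intro y hy
    have h := key y
    rw [hy] at h
    linear_combination h
  have mem₁ : ∀ y ∈ LinearMap.range P₁, P₁ y = y := by
    rintro y ⟨z, rfl⟩
    exact LinearMap.congr_fun h₁ z
  have mem₂ : ∀ y ∈ LinearMap.range P₂, P₂ y = y := by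
    rintro y ⟨z, rfl⟩
    exact LinearMap.congr_fun h₂ z
  -- c ≥ 1
  have hc1 : 1 ≤ c := by
    have hpos : LinearMap.range P₁ ≠ ⊥ ∨ LinearMap.range P₂ ≠ ⊥ := by
      by_contra h
      push_neg at h
      rw [h.1, h.2] at hne
      exact hne rfl
    rcases hpos with h | h
    · obtain ⟨y, hy, hy0⟩ := Submodule.exists_mem_ne_zero_of_ne_bot h
      have := fix₁ y (mem₁ y hy)
      have hn : 0 < ‖y‖ ^ 2 := pow_pos (norm_pos_iff.mpr hy0) 2
      nlinarith [sq_nonneg ‖P₂ y‖]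
    · obtain ⟨y, hy, hy0⟩ := Submodule.exists_mem_ne_zero_of_ne_bot h
      have := fix₂ y (mem₂ y hy)
      have hn : 0 < ‖y‖ ^ 2 := pow_pos (norm_pos_iff.mpr hy0) 2
      nlinarith [sq_nonneg ‖P₁ y‖]
  -- c ≤ 1
  have hc2 : c ≤ 1 := by
    by_contra hgt
    push_neg at hgt
    have hmap12 : ∀ x ∈ LinearMap.range P₁, P₂ x ∈ LinearMap.range P₂ :=
      fun x _ => LinearMap.mem_range_self _ x
    have hmap21 : ∀ x ∈ LinearMap.range P₂, P₁ x ∈ LinearMap.range P₁ :=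
      fun x _ => LinearMap.mem_range_self _ x
    have hinj12 : Function.Injective (P₂.restrict hmap12) := by
      rw [injective_iff_map_eq_zero]
      rintro ⟨x, hx⟩ hx0
      have hPx : P₂ x = 0 := congrArg Subtype.val hx0
      have h := fix₁ x (mem₁ x hx)
      rw [hPx] at h
      simp only [norm_zero] at h
      have : ‖x‖ ^ 2 = 0 := by nlinarith
      have : x = 0 := by
        rw [pow_eq_zero_iff (by norm_num), norm_eq_zero] at this
        exact this
      exact Subtype.ext this
    have hinj21 : Function.Injective (P₁.restrict hmap21) := by
      rw [injective_iff_map_eq_zero]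
      rintro ⟨x, hx⟩ hx0
      have hPx : P₁ x = 0 := congrArg Subtype.val hx0
      have h := fix₂ x (mem₂ x hx)
      rw [hPx] at h
      simp only [norm_zero] at h
      have : ‖x‖ ^ 2 = 0 := by nlinarith
      have : x = 0 := by
        rw [pow_eq_zero_iff (by norm_num), norm_eq_zero] at this
        exact this
      exact Subtype.ext this
    have le1 := LinearMap.finrank_le_finrank_of_injective hinj12
    have le2 := LinearMap.finrank_le_finrank_of_injective hinj21
    exact hne (le_antisymm le1 le2)
  have hceq : c = 1 := le_antisymm hc2 hc1
  subst hceq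
  refine ⟨rfl, ?_, ?_⟩
  · -- P₂ ∘ P₁ = 0 pointwise
    have hz : ∀ x : E, P₂ (P₁ x) = 0 := by
      intro x
      have h := fix₁ (P₁ x) (LinearMap.congr_fun h₁ x)
      simp only [sub_self, zero_mul] at h
      rwa [pow_eq_zero_iff (by norm_num), norm_eq_zero] at h
    have hA : LinearMap.adjoint P₁ ∘ₗ P₁ = P₁ := by
      ext x
      have hpp : P₁ (P₁ x) = P₁ x := LinearMap.congr_fun h₁ x
      have h := LinearMap.congr_fun htight (P₁ x)
      simp only [LinearMap.add_apply, LinearMap.comp_apply, LinearMap.smul_apply,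
        LinearMap.id_apply, hz x, map_zero, add_zero, hpp] at h
      simpa using h
    have hsa : LinearMap.adjoint (LinearMap.adjoint P₁ ∘ₗ P₁) = LinearMap.adjoint P₁ ∘ₗ P₁ := by
      rw [LinearMap.adjoint_comp, LinearMap.adjoint_adjoint]
    calc LinearMap.adjoint P₁ = LinearMap.adjoint (LinearMap.adjoint P₁ ∘ₗ P₁) := by rw [hA]
      _ = LinearMap.adjoint P₁ ∘ₗ P₁ := hsa
      _ = P₁ := hA
  · have hz : ∀ x : E, P₁ (P₂ x) = 0 := by
      intro x
      have h := fix₂ (P₂ x) (LinearMap.congr_fun h₂ x)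
      simp only [sub_self, zero_mul] at h
      rwa [pow_eq_zero_iff (by norm_num), norm_eq_zero] at h
    have hA : LinearMap.adjoint P₂ ∘ₗ P₂ = P₂ := by
      ext x
      have hpp : P₂ (P₂ x) = P₂ x := LinearMap.congr_fun h₂ x
      have h := LinearMap.congr_fun htight (P₂ x)
      simp only [LinearMap.add_apply, LinearMap.comp_apply, LinearMap.smul_apply,
        LinearMap.id_apply, hz x, map_zero, zero_add, hpp] at h
      simpa using h
    have hsa : LinearMap.adjoint (LinearMap.adjoint P₂ ∘ₗ P₂) = LinearMap.adjoint P₂ ∘ₗ P₂ := by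
      rw [LinearMap.adjoint_comp, LinearMap.adjoint_adjoint]
    calc LinearMap.adjoint P₂ = LinearMap.adjoint (LinearMap.adjoint P₂ ∘ₗ P₂) := by rw [hA]
      _ = LinearMap.adjoint P₂ ∘ₗ P₂ := hsa
      _ = P₂ := hA
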